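/- For a k x 2n complex matrix X with i.i.d. standard complex Gaussian entries and k=1 (i.e., X is a 1 x 2n row vector), the expectation of |Haf(X^T X)|^4 equals ((2n-1)!!)^4 * 4^n. -/

import Mathlib

open MeasureTheory ProbabilityTheory Matrix

/-- Standard complex Gaussian (mean 0, unit variance `E[|x|²] = 1`):
real and imaginary parts independent real Gaussians of variance 1/2. -/
noncomputable def complexGaussian : Measure ℂ :=
  ((gaussianReal 0 (1 / 2)).prod (gaussianReal 0 (1 / 2))).map
    Complex.measurableEquivRealProd.symm

instance : IsProbabilityMeasure complexGaussian :=
  Measure.isProbabilityMeasure_map Complex.measurableEquivRealProd.symm.measurable.aemeasurable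

/-- i.i.d. standard complex Gaussian entries for a `k × m` array. -/
noncomputable def gaussianEnsemble (k m : ℕ) : Measure (Fin k → Fin m → ℂ) :=
  Measure.pi fun _ : Fin k => Measure.pi fun _ : Fin m => complexGaussian

/-- The hafnian of a `2n × 2n` matrix:
`Haf(A) = (1/(n! 2ⁿ)) ∑_{σ ∈ S_{2n}} ∏_{j=1}^{n} A_{σ(2j-1), σ(2j)}`. -/
noncomputable def haf {n : ℕ} (A : Matrix (Fin (2 * n)) (Fin (2 * n)) ℂ) : ℂ :=
  (1 / ((n.factorial : ℂ) * 2 ^ n)) *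
    ∑ σ : Equiv.Perm (Fin (2 * n)), ∏ j : Fin n,
      A (σ ⟨2 * j.val, by have := j.isLt; omega⟩)
        (σ ⟨2 * j.val + 1, by have := j.isLt; omega⟩)

/-! ### Auxiliary lemmas -/

open Real Finset
open scoped ENNReal NNReal

lemma aux_prod_pair_nat {M : Type*} [CommMonoid M] (n : ℕ) (F : ℕ → M) :
    ∏ j ∈ Finset.range n, (F (2 * j) * F (2 * j + 1)) = ∏ i ∈ Finset.range (2 * n), F i := by
  induction n with
  | zero => simp
  | succ m ih =>
      rw [Finset.prod_range_succ, ih, show 2 * (m + 1) = (2 * m + 1) + 1 by ring,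
        Finset.prod_range_succ, Finset.prod_range_succ, mul_assoc]

lemma aux_prod_pair_fin {M : Type*} [CommMonoid M] {n : ℕ} (f : Fin (2 * n) → M) :
    (∏ j : Fin n, f ⟨2 * j.val, by have := j.isLt; omega⟩ *
        f ⟨2 * j.val + 1, by have := j.isLt; omega⟩) = ∏ i, f i := by
  set F : ℕ → M := fun m => if h : m < 2 * n then f ⟨m, h⟩ else 1 with hF
  have h1 : (∏ j : Fin n, f ⟨2 * j.val, by have := j.isLt; omega⟩ *
      f ⟨2 * j.val + 1, by have := j.isLt; omega⟩)
      = ∏ j : Fin n, (F (2 * j.val) * F (2 * j.val + 1)) := by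
    refine Finset.prod_congr rfl fun j _ => ?_
    have hj := j.isLt
    rw [hF]
    beta_reduce
    rw [dif_pos (by omega : 2 * j.val < 2 * n), dif_pos (by omega : 2 * j.val + 1 < 2 * n)]
  have h2 : ∏ i : Fin (2 * n), f i = ∏ i : Fin (2 * n), F i.val := by
    refine Finset.prod_congr rfl fun i _ => ?_
    rw [hF]
    beta_reduce
    rw [dif_pos i.isLt]
  rw [h1, h2, Fin.prod_univ_eq_prod_range (fun m => F (2 * m) * F (2 * m + 1)) n,
    Fin.prod_univ_eq_prod_range F (2 * n), aux_prod_pair_nat]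

lemma aux_fact_dfact (n : ℕ) :
    (2 * n).factorial = (2 * n - 1).doubleFactorial * (n.factorial * 2 ^ n) := by
  cases n with
  | zero => rfl
  | succ m =>
      have h2 : 2 * (m + 1) = (2 * m + 1) + 1 := by ring
      rw [h2, Nat.factorial_eq_mul_doubleFactorial, show (2 * m + 1) + 1 = 2 * (m + 1) by ring,
        Nat.doubleFactorial_two_mul, show 2 * (m + 1) - 1 = 2 * m + 1 by omega]
      ring

lemma aux_haf_eq {n : ℕ} (A : Matrix (Fin (2 * n)) (Fin (2 * n)) ℂ) (x : Fin (2 * n) → ℂ)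
    (hA : ∀ i j, A i j = x i * x j) :
    haf A = ((2 * n - 1).doubleFactorial : ℂ) * ∏ i, x i := by
  unfold haf
  have h1 : ∀ σ : Equiv.Perm (Fin (2 * n)),
      (∏ j : Fin n, A (σ ⟨2 * j.val, by have := j.isLt; omega⟩)
        (σ ⟨2 * j.val + 1, by have := j.isLt; omega⟩)) = ∏ i, x i := by
    intro σ
    calc (∏ j : Fin n, A (σ ⟨2 * j.val, by have := j.isLt; omega⟩)
            (σ ⟨2 * j.val + 1, by have := j.isLt; omega⟩))
        = ∏ j : Fin n, ((x ∘ σ) ⟨2 * j.val, by have := j.isLt; omega⟩ *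
            (x ∘ σ) ⟨2 * j.val + 1, by have := j.isLt; omega⟩) := by
          exact Finset.prod_congr rfl fun j _ => hA _ _
      _ = ∏ i, (x ∘ σ) i := aux_prod_pair_fin _
      _ = ∏ i, x i := Equiv.prod_comp σ x
  rw [Finset.sum_congr rfl (fun σ _ => h1 σ), Finset.sum_const, Finset.card_univ,
    Fintype.card_perm, Fintype.card_fin, nsmul_eq_mul]
  have key : ((2 * n).factorial : ℂ)
      = ((2 * n - 1).doubleFactorial : ℂ) * ((n.factorial : ℂ) * 2 ^ n) := by
    exact_mod_cast congrArg (Nat.cast : ℕ → ℂ) (aux_fact_dfact n)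
  rw [key]
  have hne : (n.factorial : ℂ) * 2 ^ n ≠ 0 := by
    apply mul_ne_zero
    · exact_mod_cast Nat.factorial_ne_zero n
    · exact pow_ne_zero _ two_ne_zero
  field_simp
  have hf : (n.factorial : ℂ) ≠ 0 := by exact_mod_cast Nat.factorial_ne_zero n
  rw [mul_assoc]
  exact mul_div_cancel_left₀ _ hf

/-- Integration against `gaussianReal 0 (1/2)` is integration against the density
`(√π)⁻¹ e^{-x²}`. -/
lemma aux_pdf_half (x : ℝ) :
    gaussianPDFReal 0 (1 / 2) x = (Real.sqrt π)⁻¹ * Real.exp (-x ^ 2) := by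
  rw [gaussianPDFReal]
  have h1 : 2 * π * ((1 / 2 : ℝ≥0) : ℝ) = π := by
    rw [NNReal.coe_div, NNReal.coe_one, NNReal.coe_ofNat]; ring
  have h2 : (2 : ℝ) * ((1 / 2 : ℝ≥0) : ℝ) = 1 := by
    rw [NNReal.coe_div, NNReal.coe_one, NNReal.coe_ofNat]; ring
  rw [h1, h2, sub_zero, div_one]

lemma aux_integral_gaussianHalf (g : ℝ → ℝ) :
    ∫ x, g x ∂(gaussianReal 0 (1 / 2)) = ∫ x, (Real.sqrt π)⁻¹ * (Real.exp (-x ^ 2) * g x) := by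
  rw [gaussianReal_of_var_ne_zero 0 (by norm_num), gaussianPDF_def]
  have hmeas : Measurable fun x => (gaussianPDFReal 0 (1 / 2) x).toNNReal :=
    (ProbabilityTheory.measurable_gaussianPDFReal 0 (1 / 2)).real_toNNReal
  have hrw : (fun x => ENNReal.ofReal (gaussianPDFReal 0 (1 / 2) x))
      = fun x => ((gaussianPDFReal 0 (1 / 2) x).toNNReal : ℝ≥0∞) := rfl
  rw [hrw, integral_withDensity_eq_integral_smul hmeas]
  refine integral_congr_ae (Filter.Eventually.of_forall fun x => ?_)
  have hnn : 0 ≤ gaussianPDFReal 0 (1 / 2) x := ProbabilityTheory.gaussianPDFReal_nonneg _ _ _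
  beta_reduce
  rw [NNReal.smul_def, smul_eq_mul, Real.coe_toNNReal _ hnn, aux_pdf_half]
  ring

lemma aux_integrable_pow_exp (k : ℕ) :
    Integrable (fun x : ℝ => x ^ k * Real.exp (-x ^ 2)) := by
  have h := integrable_rpow_mul_exp_neg_mul_sq (b := 1) one_pos
    (s := (k : ℝ)) (by exact_mod_cast neg_one_lt_zero.trans_le (Nat.cast_nonneg (α := ℝ) k))
  have heq : (fun x : ℝ => x ^ ((k : ℕ) : ℝ) * Real.exp (-1 * x ^ 2))
      = fun x : ℝ => x ^ k * Real.exp (-x ^ 2) := by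
    funext x
    rw [Real.rpow_natCast, neg_one_mul]
  rwa [heq] at h

lemma aux_integral_pow_exp_even (m : ℕ) :
    ∫ x : ℝ, x ^ (2 * m) * Real.exp (-x ^ 2)
      = Real.Gamma ((2 * m + 1 : ℝ) / 2) := by
  have habs : (fun x : ℝ => x ^ (2 * m) * Real.exp (-x ^ 2))
      = fun x : ℝ => |x| ^ (2 * m) * Real.exp (-|x| ^ 2) := by
    funext x
    rw [Even.pow_abs ⟨m, by ring⟩, sq_abs]
  rw [habs, integral_comp_abs (f := fun t => t ^ (2 * m) * Real.exp (-t ^ 2))]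
  have hIoi : ∫ x in Set.Ioi (0 : ℝ), x ^ (2 * m) * Real.exp (-x ^ 2)
      = ∫ x in Set.Ioi (0 : ℝ), x ^ ((2 * m : ℕ) : ℝ) * Real.exp (-x ^ (2 : ℝ)) := by
    refine setIntegral_congr_fun measurableSet_Ioi fun x hx => ?_
    rw [Real.rpow_natCast, Real.rpow_two]
  rw [hIoi, integral_rpow_mul_exp_neg_rpow two_pos
    (show (-1 : ℝ) < ((2 * m : ℕ) : ℝ) from
      neg_one_lt_zero.trans_le (Nat.cast_nonneg _))]
  rw [show (((2 * m : ℕ) : ℝ) + 1) / 2 = ((2 * m + 1 : ℝ)) / 2 by push_cast; ring]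
  ring

lemma aux_moment2 : ∫ x, x ^ 2 ∂(gaussianReal 0 (1 / 2)) = 1 / 2 := by
  rw [aux_integral_gaussianHalf]
  have : (fun x : ℝ => (Real.sqrt π)⁻¹ * (Real.exp (-x ^ 2) * x ^ 2))
      = fun x : ℝ => (Real.sqrt π)⁻¹ * (x ^ 2 * Real.exp (-x ^ 2)) := by
    funext x; ring
  rw [this, integral_const_mul]
  rw [show (2 : ℕ) = 2 * 1 by norm_num, aux_integral_pow_exp_even 1]
  have hG : Real.Gamma ((2 * (1 : ℕ) + 1 : ℝ) / 2) = Real.sqrt π / 2 := by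
    rw [show ((2 * (1 : ℕ) + 1 : ℝ)) / 2 = 1 / 2 + 1 by norm_num,
      Real.Gamma_add_one (by norm_num), Real.Gamma_one_half_eq]
    ring
  rw [hG]
  have hpi : Real.sqrt π ≠ 0 := by positivity
  field_simp

lemma aux_moment4 : ∫ x, x ^ 4 ∂(gaussianReal 0 (1 / 2)) = 3 / 4 := by
  rw [aux_integral_gaussianHalf]
  have : (fun x : ℝ => (Real.sqrt π)⁻¹ * (Real.exp (-x ^ 2) * x ^ 4))
      = fun x : ℝ => (Real.sqrt π)⁻¹ * (x ^ 4 * Real.exp (-x ^ 2)) := by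
    funext x; ring
  rw [this, integral_const_mul]
  rw [show (4 : ℕ) = 2 * 2 by norm_num, aux_integral_pow_exp_even 2]
  have hG : Real.Gamma ((2 * (2 : ℕ) + 1 : ℝ) / 2) = 3 * Real.sqrt π / 4 := by
    rw [show ((2 * (2 : ℕ) + 1 : ℝ)) / 2 = 3 / 2 + 1 by norm_num,
      Real.Gamma_add_one (by norm_num), show (3 / 2 : ℝ) = 1 / 2 + 1 by norm_num,
      Real.Gamma_add_one (by norm_num), Real.Gamma_one_half_eq]
    ring
  rw [hG]
  have hpi : Real.sqrt π ≠ 0 := by positivity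
  field_simp

lemma aux_integrable_pow_gaussianHalf (k : ℕ) :
    Integrable (fun x : ℝ => x ^ k) (gaussianReal 0 (1 / 2)) := by
  rw [gaussianReal_of_var_ne_zero 0 (by norm_num), gaussianPDF_def]
  have hmeas : Measurable fun x : ℝ => ENNReal.ofReal (gaussianPDFReal 0 (1 / 2) x) :=
    (ProbabilityTheory.measurable_gaussianPDFReal 0 (1 / 2)).ennreal_ofReal
  rw [integrable_withDensity_iff hmeas (Filter.Eventually.of_forall fun x =>
    ENNReal.ofReal_lt_top)]
  have h : ∀ x : ℝ, x ^ k * (ENNReal.ofReal (gaussianPDFReal 0 (1 / 2) x)).toReal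
      = (Real.sqrt π)⁻¹ * (x ^ k * Real.exp (-x ^ 2)) := by
    intro x
    rw [ENNReal.toReal_ofReal (ProbabilityTheory.gaussianPDFReal_nonneg _ _ _), aux_pdf_half]
    ring
  refine ((aux_integrable_pow_exp k).const_mul ((Real.sqrt π)⁻¹)).congr
    (Filter.Eventually.of_forall fun x => (h x).symm)

lemma aux_cmoment : ∫ z : ℂ, ‖z‖ ^ 4 ∂complexGaussian = 2 := by
  set P := gaussianReal 0 (1 / 2) with hP
  haveI : IsProbabilityMeasure P := by rw [hP]; infer_instance
  rw [complexGaussian, MeasureTheory.integral_map_equiv]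
  have hfun : (fun p : ℝ × ℝ =>
      ‖Complex.measurableEquivRealProd.symm p‖ ^ 4)
      = fun p : ℝ × ℝ => (fun a : ℝ => a ^ 4) p.1 * (fun _ : ℝ => (1 : ℝ)) p.2
        + ((fun a : ℝ => 2 * a ^ 2) p.1 * (fun b : ℝ => b ^ 2) p.2
          + (fun _ : ℝ => (1 : ℝ)) p.1 * (fun b : ℝ => b ^ 4) p.2) := by
    funext p
    rw [Complex.measurableEquivRealProd_symm_apply]
    have : ‖({ re := p.1, im := p.2 } : ℂ)‖ ^ 4
        = (Complex.normSq { re := p.1, im := p.2 }) ^ 2 := by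
      rw [show (4 : ℕ) = 2 * 2 by norm_num, pow_mul, Complex.sq_norm]
    rw [this, Complex.normSq_mk]
    ring
  rw [hfun]
  have I2 : Integrable (fun x : ℝ => x ^ 2) P := aux_integrable_pow_gaussianHalf 2
  have I4 : Integrable (fun x : ℝ => x ^ 4) P := aux_integrable_pow_gaussianHalf 4
  have Iu : Integrable (fun p : ℝ × ℝ => (fun a : ℝ => a ^ 4) p.1
      * (fun _ : ℝ => (1 : ℝ)) p.2) (P.prod P) :=
    I4.mul_prod (integrable_const 1)
  have Iv : Integrable (fun p : ℝ × ℝ => (fun a : ℝ => 2 * a ^ 2) p.1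
      * (fun b : ℝ => b ^ 2) p.2) (P.prod P) :=
    (I2.const_mul 2).mul_prod I2
  have Iw : Integrable (fun p : ℝ × ℝ => (fun _ : ℝ => (1 : ℝ)) p.1
      * (fun b : ℝ => b ^ 4) p.2) (P.prod P) :=
    (integrable_const (1 : ℝ)).mul_prod I4
  have Ivw : Integrable (fun p : ℝ × ℝ =>
      (fun a : ℝ => 2 * a ^ 2) p.1 * (fun b : ℝ => b ^ 2) p.2
        + (fun _ : ℝ => (1 : ℝ)) p.1 * (fun b : ℝ => b ^ 4) p.2) (P.prod P) := Iv.add Iw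
  have e1 : ∫ p : ℝ × ℝ, (fun a : ℝ => a ^ 4) p.1 * (fun _ : ℝ => (1 : ℝ)) p.2 ∂(P.prod P)
      = (∫ x, x ^ 4 ∂P) * ∫ _ : ℝ, (1 : ℝ) ∂P :=
    MeasureTheory.integral_prod_mul (fun a : ℝ => a ^ 4) (fun _ : ℝ => (1 : ℝ))
  have e2 : ∫ p : ℝ × ℝ, (fun a : ℝ => 2 * a ^ 2) p.1 * (fun b : ℝ => b ^ 2) p.2 ∂(P.prod P)
      = (∫ x, 2 * x ^ 2 ∂P) * ∫ x, x ^ 2 ∂P :=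
    MeasureTheory.integral_prod_mul (fun a : ℝ => 2 * a ^ 2) (fun b : ℝ => b ^ 2)
  have e3 : ∫ p : ℝ × ℝ, (fun _ : ℝ => (1 : ℝ)) p.1 * (fun b : ℝ => b ^ 4) p.2 ∂(P.prod P)
      = (∫ _ : ℝ, (1 : ℝ) ∂P) * ∫ x, x ^ 4 ∂P :=
    MeasureTheory.integral_prod_mul (fun _ : ℝ => (1 : ℝ)) (fun b : ℝ => b ^ 4)
  have h1 : ∫ _ : ℝ, (1 : ℝ) ∂P = 1 := by simp
  have h2 : ∫ x : ℝ, 2 * x ^ 2 ∂P = 1 := by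
    rw [integral_const_mul, aux_moment2]; norm_num
  rw [integral_add Iu Ivw, integral_add Iv Iw, e1, e2, e3, h1, h2, aux_moment2, aux_moment4]
  norm_num

lemma aux_integral_pi_prod {ι : Type*} [Fintype ι] {E : Type*} [MeasurableSpace E]
    (μ : Measure E) [SigmaFinite μ] (f : ι → E → ℝ) :
    ∫ x : ι → E, ∏ i, f i (x i) ∂(Measure.pi fun _ : ι => μ) = ∏ i, ∫ x, f i x ∂μ := by
  letI : MeasureSpace E := ⟨μ⟩
  exact MeasureTheory.integral_fintype_prod_eq_prod f

/-- For `k = 1`, `E[|Haf(XᵀX)|⁴] = ((2n-1)!!)⁴ 4ⁿ`. -/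
theorem stmt13 (n : ℕ) :
    (∫ X : Fin 1 → Fin (2 * n) → ℂ,
        ‖haf ((Matrix.of X)ᵀ * Matrix.of X)‖ ^ 4
      ∂(gaussianEnsemble 1 (2 * n)))
    = (Nat.doubleFactorial (2 * n - 1) : ℝ) ^ 4 * 4 ^ n := by
  set c : ℝ := (Nat.doubleFactorial (2 * n - 1) : ℝ) with hc
  set μin : Measure (Fin (2 * n) → ℂ) := Measure.pi fun _ : Fin (2 * n) => complexGaussian
    with hμin
  set G : (Fin (2 * n) → ℂ) → ℝ := fun y => c ^ 4 * ∏ j, ‖y j‖ ^ 4 with hG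
  have hpoint : ∀ X : Fin 1 → Fin (2 * n) → ℂ,
      ‖haf ((Matrix.of X)ᵀ * Matrix.of X)‖ ^ 4
        = ∏ i : Fin 1, G (X i) := by
    intro X
    have hA : ∀ i j, ((Matrix.of X)ᵀ * Matrix.of X) i j = X 0 i * X 0 j := by
      intro i j
      simp [Matrix.mul_apply, Fin.sum_univ_one, Matrix.transpose_apply]
    rw [aux_haf_eq _ (X 0) hA, Fin.prod_univ_one, hG]
    beta_reduce
    rw [norm_mul, norm_prod, Complex.norm_natCast, mul_pow, ← Finset.prod_pow, hc]
  calc (∫ X : Fin 1 → Fin (2 * n) → ℂ,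
        ‖haf ((Matrix.of X)ᵀ * Matrix.of X)‖ ^ 4
      ∂(gaussianEnsemble 1 (2 * n)))
      = ∫ X : Fin 1 → Fin (2 * n) → ℂ, ∏ i : Fin 1, G (X i)
          ∂(Measure.pi fun _ : Fin 1 => μin) :=
        integral_congr_ae (Filter.Eventually.of_forall hpoint)
    _ = ∏ _i : Fin 1, ∫ y, G y ∂μin := aux_integral_pi_prod μin fun _ => G
    _ = ∫ y, G y ∂μin := Fin.prod_univ_one _
    _ = c ^ 4 * ∫ y, ∏ j, ‖y j‖ ^ 4 ∂μin := by
        rw [hG, integral_const_mul]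
    _ = c ^ 4 * ∏ _j : Fin (2 * n), ∫ z : ℂ, ‖z‖ ^ 4 ∂complexGaussian := by
        rw [hμin, aux_integral_pi_prod complexGaussian
          (fun (_ : Fin (2 * n)) (z : ℂ) => ‖z‖ ^ 4)]
    _ = c ^ 4 * ∏ _j : Fin (2 * n), (2 : ℝ) := by rw [aux_cmoment]
    _ = c ^ 4 * 4 ^ n := by
        rw [Finset.prod_const, Finset.card_univ, Fintype.card_fin,
          show (4 : ℝ) = 2 ^ 2 by norm_num, ← pow_mul]
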